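/- Let λ > 0 and Λ > 1. There exists a constant C = C(λ, Λ) > 0 such that for all ρ with Λ^{-1} ≤ ρ ≤ Λ and all real t, |ρ^λ e^{it} − 1| ≥ C ρ^{λ−1} |ρ e^{it} − 1|. -/

import Mathlib

open Complex

lemma abs_sq_eq_aux (a t : ℝ) :
    ‖(a:ℂ) * Complex.exp (t * Complex.I) - 1‖^2
      = (a-1)^2 + 2*a*(1 - Real.cos t) := by
  rw [Complex.sq_norm, Complex.normSq_apply]
  simp [Complex.exp_mul_I, Complex.cos_ofReal_re, Complex.sin_ofReal_re]
  ring_nf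
  nlinarith [Real.sin_sq_add_cos_sq t]

lemma mvt_rpow_aux (lam : ℝ) {a b : ℝ} (ha : 0 < a) (hab : a < b) :
    ∃ ξ ∈ Set.Ioo a b, b ^ lam - a ^ lam = lam * ξ ^ (lam - 1) * (b - a) := by
  have hpos : ∀ x ∈ Set.Icc a b, (0:ℝ) < x := fun x hx => lt_of_lt_of_le ha hx.1
  obtain ⟨ξ, hξ, hd⟩ := exists_hasDerivAt_eq_slope (fun x => x ^ lam)
    (fun x => lam * x ^ (lam - 1)) hab
    (fun x hx => (Real.continuousAt_rpow_const x lam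
      (Or.inl (hpos x hx).ne')).continuousWithinAt)
    (fun x hx => Real.hasDerivAt_rpow_const
      (Or.inl (hpos x (Set.mem_Icc_of_Ioo hx)).ne'))
  refine ⟨ξ, hξ, ?_⟩
  have hba : b - a ≠ 0 := sub_ne_zero.mpr hab.ne'
  field_simp at hd
  linarith [hd]

lemma rpow_bounds_aux {Lam : ℝ} (hLam : 1 < Lam) (μ : ℝ) {x : ℝ}
    (hx1 : Lam⁻¹ ≤ x) (hx2 : x ≤ Lam) :
    min (Lam ^ μ) (Lam ^ (-μ)) ≤ x ^ μ ∧ x ^ μ ≤ max (Lam ^ μ) (Lam ^ (-μ)) := by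
  have hL0 : (0:ℝ) < Lam := by linarith
  have hi0 : (0:ℝ) < Lam⁻¹ := inv_pos.mpr hL0
  have hx0 : 0 < x := lt_of_lt_of_le hi0 hx1
  have hinv : (Lam⁻¹ : ℝ) ^ μ = Lam ^ (-μ) := by
    rw [Real.rpow_neg hL0.le, ← Real.inv_rpow hL0.le]
  rcases le_or_gt 0 μ with hμ | hμ
  · constructor
    · calc min (Lam ^ μ) (Lam ^ (-μ)) ≤ Lam ^ (-μ) := min_le_right _ _
        _ = (Lam⁻¹) ^ μ := hinv.symm
        _ ≤ x ^ μ := Real.rpow_le_rpow hi0.le hx1 hμ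
    · calc x ^ μ ≤ Lam ^ μ := Real.rpow_le_rpow hx0.le hx2 hμ
        _ ≤ _ := le_max_left _ _
  · constructor
    · calc min (Lam ^ μ) (Lam ^ (-μ)) ≤ Lam ^ μ := min_le_left _ _
        _ ≤ x ^ μ := Real.rpow_le_rpow_of_nonpos hx0 hx2 hμ.le
    · calc x ^ μ ≤ (Lam⁻¹) ^ μ := Real.rpow_le_rpow_of_nonpos hi0 hx1 hμ.le
        _ = Lam ^ (-μ) := hinv
        _ ≤ _ := le_max_right _ _

theorem rpow_exp_lower_bound (lam Lam : ℝ) (hlam : 0 < lam) (hLam : 1 < Lam) :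
    ∃ C : ℝ, 0 < C ∧ ∀ (ρ t : ℝ), Lam⁻¹ ≤ ρ → ρ ≤ Lam →
      ‖(↑(ρ ^ lam) : ℂ) * Complex.exp (t * Complex.I) - 1‖
        ≥ C * ρ ^ (lam - 1) * ‖(ρ : ℂ) * Complex.exp (t * Complex.I) - 1‖ := by
  have hL0 : (0:ℝ) < Lam := by linarith
  have hi0 : (0:ℝ) < Lam⁻¹ := inv_pos.mpr hL0
  have hi1 : Lam⁻¹ < 1 := by
    rw [inv_lt_one_iff₀]; right; exact hLam
  obtain ⟨μ, hμdef⟩ : ∃ μ : ℝ, μ = lam - 1 := ⟨_, rfl⟩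
  obtain ⟨m, hmdef⟩ : ∃ m : ℝ, m = min (Lam ^ μ) (Lam ^ (-μ)) := ⟨_, rfl⟩
  obtain ⟨M, hMdef⟩ : ∃ M : ℝ, M = max (Lam ^ μ) (Lam ^ (-μ)) := ⟨_, rfl⟩
  have hm0 : 0 < m := hmdef ▸ lt_min (Real.rpow_pos_of_pos hL0 _) (Real.rpow_pos_of_pos hL0 _)
  have hmleM : m ≤ M := by rw [hmdef, hMdef]; exact min_le_max
  have hM0 : 0 < M := lt_of_lt_of_le hm0 hmleM
  have hmM : m * M = 1 := by
    rw [hmdef, hMdef, min_mul_max, ← Real.rpow_add hL0]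
    simp
  have hm1 : m ≤ 1 := by nlinarith
  obtain ⟨C, hCdef⟩ : ∃ C : ℝ, C = min (lam * m / M) m := ⟨_, rfl⟩
  have hC0 : 0 < C := hCdef ▸ lt_min (div_pos (mul_pos hlam hm0) hM0) hm0
  have hCm : C ≤ m := hCdef ▸ min_le_right _ _
  have hCM : C ≤ lam * m / M := hCdef ▸ min_le_left _ _
  refine ⟨C, hC0, ?_⟩
  intro ρ t h1 h2
  have hρ0 : 0 < ρ := lt_of_lt_of_le hi0 h1
  have hb := rpow_bounds_aux hLam μ h1 h2
  obtain ⟨r, hrdef⟩ : ∃ r : ℝ, r = ρ ^ μ := ⟨_, rfl⟩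
  have hbm : m ≤ r := by rw [hrdef, hmdef]; exact hb.1
  have hbM : r ≤ M := by rw [hrdef, hMdef]; exact hb.2
  have hr0 : 0 < r := lt_of_lt_of_le hm0 hbm
  obtain ⟨A, hAdef⟩ : ∃ A : ℝ, A = ρ ^ lam := ⟨_, rfl⟩
  have hsplit : A = r * ρ := by
    rw [hAdef, hrdef, hμdef, ← Real.rpow_add_one hρ0.ne']
    ring_nf
  -- key fact 1 : (A - 1)^2 ≥ (lam*m)^2 * (ρ-1)^2
  have F1 : (lam * m)^2 * (ρ-1)^2 ≤ (A - 1)^2 := by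
    rcases lt_trichotomy ρ 1 with h | h | h
    · obtain ⟨ξ, hξ, heq⟩ := mvt_rpow_aux lam hρ0 h
      have hξ1 : Lam⁻¹ ≤ ξ := le_trans h1 hξ.1.le
      have hξ2 : ξ ≤ Lam := le_trans hξ.2.le hLam.le
      have hξm : m ≤ ξ ^ μ := hmdef ▸ (rpow_bounds_aux hLam μ hξ1 hξ2).1
      rw [Real.one_rpow, ← hμdef, ← hAdef] at heq
      obtain ⟨u, hu⟩ : ∃ u : ℝ, u = ξ ^ μ := ⟨_, rfl⟩
      rw [← hu] at heq hξm
      have heq' : A - 1 = lam * u * (ρ - 1) := by linarith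
      rw [heq']
      have hmm : m * m ≤ u * u := mul_le_mul hξm hξm hm0.le (le_trans hm0.le hξm)
      calc (lam * m)^2 * (ρ-1)^2 = (lam^2 * (ρ-1)^2) * (m * m) := by ring
        _ ≤ (lam^2 * (ρ-1)^2) * (u * u) :=
            mul_le_mul_of_nonneg_left hmm (by positivity)
        _ = (lam * u * (ρ-1))^2 := by ring
    · rw [hAdef, h, Real.one_rpow]
      simp
    · obtain ⟨ξ, hξ, heq⟩ := mvt_rpow_aux lam one_pos h
      have hξ1 : Lam⁻¹ ≤ ξ := le_trans hi1.le hξ.1.le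
      have hξ2 : ξ ≤ Lam := le_trans hξ.2.le h2
      have hξm : m ≤ ξ ^ μ := hmdef ▸ (rpow_bounds_aux hLam μ hξ1 hξ2).1
      rw [Real.one_rpow, ← hμdef, ← hAdef] at heq
      obtain ⟨u, hu⟩ : ∃ u : ℝ, u = ξ ^ μ := ⟨_, rfl⟩
      rw [← hu] at heq hξm
      have heq' : A - 1 = lam * u * (ρ - 1) := by linarith
      rw [heq']
      have hmm : m * m ≤ u * u := mul_le_mul hξm hξm hm0.le (le_trans hm0.le hξm)
      calc (lam * m)^2 * (ρ-1)^2 = (lam^2 * (ρ-1)^2) * (m * m) := by ring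
        _ ≤ (lam^2 * (ρ-1)^2) * (u * u) :=
            mul_le_mul_of_nonneg_left hmm (by positivity)
        _ = (lam * u * (ρ-1))^2 := by ring
  -- key fact 2 : C^2 * r ≤ 1
  have F2 : C^2 * r ≤ 1 := by
    have hC2 : C^2 ≤ m^2 := pow_le_pow_left₀ hC0.le hCm 2
    calc C^2 * r ≤ m^2 * M := mul_le_mul hC2 hbM hr0.le (sq_nonneg m)
      _ = m * (m * M) := by ring
      _ = m * 1 := by rw [hmM]
      _ ≤ 1 := by rw [mul_one]; exact hm1
  -- key fact 3 : C * r ≤ lam * m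
  have F3 : C * r ≤ lam * m := by
    have h0 : 0 ≤ lam * m / M := le_of_lt (div_pos (mul_pos hlam hm0) hM0)
    calc C * r ≤ (lam * m / M) * M := mul_le_mul hCM hbM hr0.le h0
      _ = lam * m := div_mul_cancel₀ _ hM0.ne'
  obtain ⟨X, hX⟩ : ∃ X, X = ‖(↑(ρ ^ lam) : ℂ) * Complex.exp (t * Complex.I) - 1‖ :=
    ⟨_, rfl⟩
  obtain ⟨Y, hY⟩ : ∃ Y, Y = ‖(ρ : ℂ) * Complex.exp (t * Complex.I) - 1‖ := ⟨_, rfl⟩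
  rw [← hX, ← hY, ← hμdef, ← hrdef]
  have hX2 : X^2 = (A - 1)^2 + 2*A*(1 - Real.cos t) := by
    rw [hX, hAdef]; exact abs_sq_eq_aux _ t
  have hY2 : Y^2 = (ρ - 1)^2 + 2*ρ*(1 - Real.cos t) := by
    rw [hY]; exact abs_sq_eq_aux _ t
  have hcos : 0 ≤ 1 - Real.cos t := by linarith [Real.cos_le_one t]
  have hK0 : 0 ≤ C * r := le_of_lt (mul_pos hC0 hr0)
  have hsq : (C * r * Y)^2 ≤ X^2 := by
    have e1 : (C * r)^2 * (ρ-1)^2 ≤ (A - 1)^2 := by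
      have h4 : (C * r)^2 ≤ (lam * m)^2 := by
        have h7 := mul_le_mul F3 F3 hK0 (le_of_lt (mul_pos hlam hm0))
        rw [sq, sq]; exact h7
      calc (C * r)^2 * (ρ-1)^2 ≤ (lam * m)^2 * (ρ-1)^2 :=
            mul_le_mul_of_nonneg_right h4 (sq_nonneg _)
        _ ≤ _ := F1
    have e2 : (C * r)^2 * (2*ρ*(1 - Real.cos t)) ≤ 2*A*(1 - Real.cos t) := by
      rw [hsplit]
      have h5 : (C * r)^2 = (C^2 * r) * r := by ring
      rw [h5]
      have h6 : (C^2 * r) * r ≤ r := by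
        have := mul_le_mul_of_nonneg_right F2 hr0.le
        linarith
      calc ((C^2 * r) * r) * (2*ρ*(1 - Real.cos t)) ≤ r * (2*ρ*(1 - Real.cos t)) :=
            mul_le_mul_of_nonneg_right h6 (by positivity)
        _ = 2*(r*ρ)*(1 - Real.cos t) := by ring
    calc (C * r * Y)^2 = (C * r)^2 * Y^2 := by ring
      _ = (C * r)^2 * (ρ-1)^2 + (C * r)^2 * (2*ρ*(1 - Real.cos t)) := by
          rw [hY2]; ring
      _ ≤ (A - 1)^2 + 2*A*(1 - Real.cos t) := add_le_add e1 e2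
      _ = X^2 := hX2.symm
  have hXnn : 0 ≤ X := hX ▸ norm_nonneg _
  have hYnn : 0 ≤ Y := hY ▸ norm_nonneg _
  have hKY : 0 ≤ C * r * Y := mul_nonneg hK0 hYnn
  exact (pow_le_pow_iff_left₀ hKY hXnn two_ne_zero).mp hsq
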